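/- arXiv:1807.05005 — 3 statements merged into one kernel-verified Lean document; each statement's English description precedes it below -/
import Mathlib

section
/- Let H : [0,T] → ℝ^d be Lipschitz with constant L and satisfy H₀ := min_{t∈[0,T]} |H(t)| > 0. Let S* ∈ (1/√2, 1). Then for any natural number m with m ≥ 2LT/(H₀(1 - S*)), the uniform partition t_j = jT/m of [0,T] satisfies: for all j = 0,…,m−1 and all t ∈ [t_j, t_{j+1}], H(t) · (H(t_j)/|H(t_j)|) ≥ S* |H(t)|. -/
open Set

theorem stmt0 (d : ℕ) (T L S H0 : ℝ) (hT : 0 < T) (hL : 0 ≤ L)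
    (H : ℝ → EuclideanSpace ℝ (Fin d))
    (hLip : ∀ t ∈ Set.Icc (0:ℝ) T, ∀ s ∈ Set.Icc (0:ℝ) T, ‖H t - H s‖ ≤ L * |t - s|)
    (hH0 : IsLeast ((fun t => ‖H t‖) '' Set.Icc (0:ℝ) T) H0)
    (hH0pos : 0 < H0)
    (hS : 1 / Real.sqrt 2 < S ∧ S < 1)
    (m : ℕ) (hm : (m : ℝ) ≥ 2 * L * T / (H0 * (1 - S))) :
    ∀ j : ℕ, j < m → ∀ t ∈ Set.Icc ((j : ℝ) * T / m) (((j : ℝ) + 1) * T / m),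
      (inner ℝ (H t) (‖H ((j : ℝ) * T / m)‖⁻¹ • H ((j : ℝ) * T / m)) : ℝ) ≥ S * ‖H t‖ := by
  obtain ⟨hS1, hS2⟩ := hS
  have hSpos : 0 < S := lt_trans (by positivity) hS1
  intro j hj t ht
  have hmpos : 0 < m := lt_of_le_of_lt (Nat.zero_le j) hj
  have hmR : (0:ℝ) < m := by exact_mod_cast hmpos
  have hjm : (j : ℝ) + 1 ≤ m := by exact_mod_cast Nat.succ_le_of_lt hj
  set tj : ℝ := (j : ℝ) * T / m with htj_def
  have hj0 : (0:ℝ) ≤ (j:ℝ) := Nat.cast_nonneg j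
  have htj_mem : tj ∈ Set.Icc (0:ℝ) T := by
    constructor
    · positivity
    · rw [div_le_iff₀ hmR]
      nlinarith
  have ht_mem : t ∈ Set.Icc (0:ℝ) T := by
    constructor
    · exact le_trans htj_mem.1 ht.1
    · refine le_trans ht.2 ?_
      rw [div_le_iff₀ hmR]
      nlinarith
  have hub : t - tj ≤ T / m := by
    have heq : ((j:ℝ) + 1) * T / m = tj + T / m := by rw [htj_def]; ring
    have := ht.2
    rw [heq] at this
    linarith
  have hlb : 0 ≤ t - tj := by linarith [ht.1]
  have hδ : ‖H t - H tj‖ ≤ L * (T / m) := by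
    have h1 := hLip t ht_mem tj htj_mem
    rw [abs_of_nonneg hlb] at h1
    have : L * (t - tj) ≤ L * (T / m) := by
      apply mul_le_mul_of_nonneg_left hub hL
    linarith
  have ha : H0 ≤ ‖H tj‖ := hH0.2 ⟨tj, htj_mem, rfl⟩
  have hapos : 0 < ‖H tj‖ := lt_of_lt_of_le hH0pos ha
  have hLTm : L * (T / m) ≤ H0 * (1 - S) / 2 := by
    have hden : 0 < H0 * (1 - S) := by nlinarith
    rw [ge_iff_le, div_le_iff₀ hden] at hm
    have heq : L * (T / m) = L * T / m := by ring
    rw [heq, div_le_div_iff₀ hmR (by norm_num : (0:ℝ) < 2)]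
    nlinarith
  set a := ‖H tj‖
  set b := ‖H t‖
  set δ := ‖H t - H tj‖
  have hδnn : 0 ≤ δ := norm_nonneg _
  have h2δ : 2 * δ ≤ (1 - S) * a := by nlinarith
  have hb : b ≤ a + δ := by
    have heq : H tj + (H t - H tj) = H t := by abel
    calc b = ‖H tj + (H t - H tj)‖ := by rw [heq]
    _ ≤ a + δ := norm_add_le _ _
  have hinner : (inner ℝ (H t) (H tj) : ℝ) ≥ a ^ 2 - δ * a := by
    have heq : (inner ℝ (H t) (H tj) : ℝ)
        = ‖H tj‖ ^ 2 + (inner ℝ (H t - H tj) (H tj) : ℝ) := by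
      rw [inner_sub_left, real_inner_self_eq_norm_sq]; ring
    have habs : |(inner ℝ (H t - H tj) (H tj) : ℝ)| ≤ δ * a :=
      abs_real_inner_le_norm _ _
    have := neg_le_of_abs_le habs
    rw [heq]
    linarith
  rw [real_inner_smul_right]
  have hfinal : a⁻¹ * (a ^ 2 - δ * a) = a - δ := by field_simp
  have : a⁻¹ * (a ^ 2 - δ * a) ≤ a⁻¹ * (inner ℝ (H t) (H tj) : ℝ) :=
    mul_le_mul_of_nonneg_left hinner (by positivity)
  rw [hfinal] at this
  have hSb : S * b ≤ a - δ := by nlinarith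
  linarith
end

section
/- Let Ω ⊂ ℝ^d be bounded with 0 ∈ closure(Ω) and diameter δ_Ω, S* ∈ (1/√2, 1), R ≥ ((1+S*)/(1−S*)) δ_Ω, η a unit vector, and x₀ := −Rη. Suppose v ∈ ℝ^d satisfies v · η ≥ S*|v| and |v| ≥ H₀ > 0. Then for every x ∈ closure(Ω), v · (x − x₀) ≥ (2S*² − 1) H₀ d, where d := min_{y ∈ closure(Ω)} |y − x₀|. -/
lemma aux_inner {E : Type*} [NormedAddCommGroup E] [InnerProductSpace ℝ E]
    (η u w : E) (hη : ‖η‖ = 1) (S : ℝ) (hS0 : 0 ≤ S) (hS1 : S ≤ 1)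
    (hu : (inner ℝ u η : ℝ) ≥ S * ‖u‖) (hw : (inner ℝ w η : ℝ) ≥ S * ‖w‖) :
    (inner ℝ u w : ℝ) ≥ (2 * S ^ 2 - 1) * ‖u‖ * ‖w‖ := by
  set a : ℝ := inner ℝ u η with ha
  set b : ℝ := inner ℝ w η with hb
  set u' := u - a • η with hu'
  set w' := w - b • η with hw'
  have hηn : (inner ℝ η η : ℝ) = 1 := by
    rw [real_inner_self_eq_norm_sq, hη]; norm_num
  have hu'η : (inner ℝ u' η : ℝ) = 0 := by
    simp [hu', inner_sub_left, real_inner_smul_left, hηn, hη, ha]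
  have hw'η : (inner ℝ w' η : ℝ) = 0 := by
    simp [hw', inner_sub_left, real_inner_smul_left, hηn, hη, hb]
  have hdecomp : (inner ℝ u w : ℝ) = a * b + inner ℝ u' w' := by
    have h1 : u = u' + a • η := by simp [hu']
    have h2 : w = w' + b • η := by simp [hw']
    rw [h1, h2]
    rw [inner_add_left, inner_add_right, inner_add_right, real_inner_smul_left,
      real_inner_smul_left, real_inner_smul_right, real_inner_smul_right,
      hηn, hu'η, real_inner_comm w' η, hw'η]
    ring
  have hnu : ‖u'‖ ^ 2 = ‖u‖ ^ 2 - a ^ 2 := by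
    rw [hu', norm_sub_sq_real, real_inner_smul_right, ← ha, norm_smul, hη, mul_one,
      Real.norm_eq_abs, sq_abs]
    ring
  have hnw : ‖w'‖ ^ 2 = ‖w‖ ^ 2 - b ^ 2 := by
    rw [hw', norm_sub_sq_real, real_inner_smul_right, ← hb, norm_smul, hη, mul_one,
      Real.norm_eq_abs, sq_abs]
    ring
  have hcs : (inner ℝ u' w' : ℝ) ≥ -(‖u'‖ * ‖w'‖) := by
    have := abs_real_inner_le_norm u' w'
    cases abs_le.mp this with
    | intro h1 h2 => linarith
  have hunn : (0:ℝ) ≤ ‖u‖ := norm_nonneg _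
  have hwnn : (0:ℝ) ≤ ‖w‖ := norm_nonneg _
  have hu'nn : (0:ℝ) ≤ ‖u'‖ := norm_nonneg _
  have hw'nn : (0:ℝ) ≤ ‖w'‖ := norm_nonneg _
  have hu'le : ‖u'‖ ^ 2 ≤ (1 - S ^ 2) * ‖u‖ ^ 2 := by
    nlinarith [mul_self_le_mul_self (mul_nonneg hS0 hunn) hu]
  have hw'le : ‖w'‖ ^ 2 ≤ (1 - S ^ 2) * ‖w‖ ^ 2 := by
    nlinarith [mul_self_le_mul_self (mul_nonneg hS0 hwnn) hw]
  have hS2nn : (0:ℝ) ≤ 1 - S ^ 2 := by nlinarith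
  have hQnn : (0:ℝ) ≤ (1 - S ^ 2) * (‖u‖ * ‖w‖) := by positivity
  have hprod : ‖u'‖ * ‖w'‖ ≤ (1 - S ^ 2) * (‖u‖ * ‖w‖) := by
    have hsq : (‖u'‖ * ‖w'‖) ^ 2 ≤ ((1 - S ^ 2) * (‖u‖ * ‖w‖)) ^ 2 := by
      have h1 := mul_le_mul hu'le hw'le (by positivity) (by positivity)
      calc (‖u'‖ * ‖w'‖) ^ 2 = ‖u'‖ ^ 2 * ‖w'‖ ^ 2 := by ring
      _ ≤ (1 - S ^ 2) * ‖u‖ ^ 2 * ((1 - S ^ 2) * ‖w‖ ^ 2) := h1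
      _ = ((1 - S ^ 2) * (‖u‖ * ‖w‖)) ^ 2 := by ring
    exact (pow_le_pow_iff_left₀ (mul_nonneg hu'nn hw'nn) hQnn (by norm_num)).mp hsq
  have hab : a * b ≥ S ^ 2 * (‖u‖ * ‖w‖) := by
    have := mul_le_mul hu hw (mul_nonneg hS0 hwnn) (le_trans (mul_nonneg hS0 hunn) hu)
    nlinarith
  have hr : (2 * S ^ 2 - 1) * ‖u‖ * ‖w‖ = S ^ 2 * (‖u‖ * ‖w‖) - (1 - S ^ 2) * (‖u‖ * ‖w‖) := by
    ring
  rw [hdecomp, ge_iff_le, hr]; linarith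

theorem stmt4 (d : ℕ) (Ω : Set (EuclideanSpace ℝ (Fin d)))
    (hb : Bornology.IsBounded Ω)
    (h0 : (0 : EuclideanSpace ℝ (Fin d)) ∈ closure Ω)
    (S R H0 : ℝ) (hS : 1 / Real.sqrt 2 < S ∧ S < 1)
    (η : EuclideanSpace ℝ (Fin d)) (hη : ‖η‖ = 1)
    (hR : R ≥ (1 + S) / (1 - S) * Metric.diam Ω)
    (x₀ : EuclideanSpace ℝ (Fin d)) (hx₀ : x₀ = -R • η)
    (v : EuclideanSpace ℝ (Fin d))
    (hv : (inner ℝ v η : ℝ) ≥ S * ‖v‖)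
    (hH0 : 0 < H0) (hvn : ‖v‖ ≥ H0) :
    ∀ x ∈ closure Ω,
      (inner ℝ v (x - x₀) : ℝ) ≥ (2 * S ^ 2 - 1) * H0 * Metric.infDist x₀ (closure Ω) := by
  intro x hx
  obtain ⟨hS2, hS1⟩ := hS
  have hsqrt2 : (0:ℝ) < Real.sqrt 2 := by positivity
  have hS0 : (0:ℝ) < S := lt_trans (by positivity) hS2
  have hShalf : 1 / 2 < S ^ 2 := by
    have : (1 / Real.sqrt 2) ^ 2 < S ^ 2 := by
      apply pow_lt_pow_left₀ hS2 (by positivity) (by norm_num)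
    rwa [div_pow, one_pow, Real.sq_sqrt (by norm_num : (2:ℝ) ≥ 0)] at this
  set δ := Metric.diam Ω with hδ
  have hδ0 : 0 ≤ δ := Metric.diam_nonneg
  have hxδ : ‖x‖ ≤ δ := by
    have := Metric.dist_le_diam_of_mem (Metric.isBounded_closure_of_isBounded hb) hx h0
    simpa [Metric.diam_closure, dist_zero_right] using this
  have hRδ : R * (1 - S) ≥ (1 + S) * δ := by
    have h1S : 0 < 1 - S := by linarith
    rw [ge_iff_le, ← div_le_iff₀ h1S] at *
    calc (1 + S) * δ / (1 - S) = (1 + S) / (1 - S) * δ := by ring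
    _ ≤ R := hR
  set w := x - x₀ with hw
  have hwx : w = x + R • η := by
    rw [hw, hx₀]; module
  have hinwη : (inner ℝ w η : ℝ) = inner ℝ x η + R := by
    rw [hwx, inner_add_left, real_inner_smul_left, real_inner_self_eq_norm_sq, hη]
    ring
  have hxη : (inner ℝ x η : ℝ) ≥ -‖x‖ := by
    have := abs_real_inner_le_norm x η
    rw [hη, mul_one] at this
    cases abs_le.mp this with
    | intro h1 h2 => linarith
  have hwnorm : ‖w‖ ≤ δ + R := by
    calc ‖w‖ = ‖x + R • η‖ := by rw [hwx]
    _ ≤ ‖x‖ + ‖R • η‖ := norm_add_le _ _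
    _ ≤ δ + R := by
        rw [norm_smul, hη, mul_one, Real.norm_eq_abs, abs_of_nonneg (by nlinarith)]
        linarith
  have hwη : (inner ℝ w η : ℝ) ≥ S * ‖w‖ := by
    have h1 : (inner ℝ w η : ℝ) ≥ R - δ := by rw [hinwη]; linarith
    have h2 : S * ‖w‖ ≤ S * (δ + R) := by
      apply mul_le_mul_of_nonneg_left hwnorm (le_of_lt hS0)
    nlinarith
  have hmain := aux_inner η v w hη S (le_of_lt hS0) (le_of_lt hS1) hv hwη
  have hD : Metric.infDist x₀ (closure Ω) ≤ ‖w‖ := by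
    calc Metric.infDist x₀ (closure Ω) ≤ dist x₀ x := Metric.infDist_le_dist_of_mem hx
    _ = ‖w‖ := by rw [dist_eq_norm, ← norm_neg]; congr 1; rw [hw]; abel
  have hDnn : 0 ≤ Metric.infDist x₀ (closure Ω) := Metric.infDist_nonneg
  have h2S : 0 < 2 * S ^ 2 - 1 := by linarith
  calc (inner ℝ v w : ℝ) ≥ (2 * S ^ 2 - 1) * ‖v‖ * ‖w‖ := hmain
  _ ≥ (2 * S ^ 2 - 1) * H0 * Metric.infDist x₀ (closure Ω) := by
      nlinarith [mul_le_mul hvn hD hDnn (norm_nonneg v)]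
end

section
/- Let ρ > 0, σ > 3ρ/2, Ω_σ = {z ∈ ℝ² : |z| < σ}, and let f ∈ C¹(ℝ²) with support contained in the open disc of radius ρ/2 centered at the origin. Define α(t) = (ρ cos t, ρ sin t) and v(x,y,t) = f(x − ρ cos t, y − ρ sin t). Then v satisfies ∂_t v + α'(t)·∇v = 0 on ℝ² × (0, 2π), |α'(t)| = ρ for all t, and v(·,·,t) vanishes on a neighborhood of ∂Ω_σ for every t ∈ [0, 2π]. -/
open Real Set

noncomputable def Avec (ρ t : ℝ) : EuclideanSpace ℝ (Fin 2) :=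
  (WithLp.equiv 2 (Fin 2 → ℝ)).symm ![ρ * Real.cos t, ρ * Real.sin t]

noncomputable def Avec' (ρ t : ℝ) : EuclideanSpace ℝ (Fin 2) :=
  (WithLp.equiv 2 (Fin 2 → ℝ)).symm ![-(ρ * Real.sin t), ρ * Real.cos t]

lemma hasDerivAt_Avec (ρ t : ℝ) : HasDerivAt (Avec ρ) (Avec' ρ t) t := by
  have h : HasDerivAt (fun s => (![ρ * Real.cos s, ρ * Real.sin s] : Fin 2 → ℝ))
      ![-(ρ * Real.sin t), ρ * Real.cos t] t := by
    rw [hasDerivAt_pi]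
    intro i
    fin_cases i
    · simpa [mul_neg] using (Real.hasDerivAt_cos t).const_mul ρ
    · simpa using (Real.hasDerivAt_sin t).const_mul ρ
  exact ((PiLp.continuousLinearEquiv 2 ℝ (fun _ : Fin 2 => ℝ)).symm.toContinuousLinearMap.hasFDerivAt.comp_hasDerivAt t h)

lemma norm_Avec (ρ : ℝ) (hρ : 0 ≤ ρ) (t : ℝ) : ‖Avec ρ t‖ = ρ := by
  rw [EuclideanSpace.norm_eq]
  simp only [Avec, WithLp.equiv_symm_apply, WithLp.ofLp_toLp, Fin.sum_univ_two,
    Matrix.cons_val_zero, Matrix.cons_val_one, Matrix.head_cons, Real.norm_eq_abs, sq_abs]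
  have h : (ρ * Real.cos t) ^ 2 + (ρ * Real.sin t) ^ 2 = ρ ^ 2 := by
    nlinarith [Real.sin_sq_add_cos_sq t]
  rw [h, Real.sqrt_sq hρ]

lemma norm_Avec' (ρ : ℝ) (hρ : 0 ≤ ρ) (t : ℝ) : ‖Avec' ρ t‖ = ρ := by
  rw [EuclideanSpace.norm_eq]
  simp only [Avec', WithLp.equiv_symm_apply, WithLp.ofLp_toLp, Fin.sum_univ_two,
    Matrix.cons_val_zero, Matrix.cons_val_one, Matrix.head_cons, Real.norm_eq_abs, sq_abs]
  have h : (-(ρ * Real.sin t)) ^ 2 + (ρ * Real.cos t) ^ 2 = ρ ^ 2 := by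
    nlinarith [Real.sin_sq_add_cos_sq t]
  rw [h, Real.sqrt_sq hρ]

theorem stmt8 (ρ σ : ℝ) (hρ : 0 < ρ) (hσ : 3 * ρ / 2 < σ)
    (f : EuclideanSpace ℝ (Fin 2) → ℝ) (hf : ContDiff ℝ 1 f)
    (hsupp : tsupport f ⊆ Metric.ball (0 : EuclideanSpace ℝ (Fin 2)) (ρ / 2))
    (α : ℝ → EuclideanSpace ℝ (Fin 2))
    (hα : ∀ t, α t 0 = ρ * Real.cos t ∧ α t 1 = ρ * Real.sin t)
    (v : EuclideanSpace ℝ (Fin 2) → ℝ → ℝ)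
    (hv : ∀ z t, v z t = f (z - α t)) :
    (∀ z : EuclideanSpace ℝ (Fin 2), ∀ t ∈ Set.Ioo (0:ℝ) (2 * π),
        deriv (fun τ => v z τ) t + (inner ℝ (deriv α t) (gradient (fun y => v y t) z) : ℝ) = 0)
    ∧ (∀ t : ℝ, ‖deriv α t‖ = ρ)
    ∧ (∀ t ∈ Set.Icc (0:ℝ) (2 * π),
        ∀ᶠ z in nhdsSet (Metric.sphere (0 : EuclideanSpace ℝ (Fin 2)) σ), v z t = 0) := by
  have hαA : α = Avec ρ := by
    funext t
    ext i
    fin_cases i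
    · simpa [Avec, WithLp.equiv_symm_apply] using (hα t).1
    · simpa [Avec, WithLp.equiv_symm_apply] using (hα t).2
  have hderivα : ∀ t, deriv α t = Avec' ρ t := by
    intro t
    rw [hαA]
    exact (hasDerivAt_Avec ρ t).deriv
  refine ⟨?_, ?_, ?_⟩
  · intro z t ht
    set F := fderiv ℝ f (z - Avec ρ t) with hFdef
    have hF : HasFDerivAt f F (z - Avec ρ t) :=
      ((hf.differentiable one_ne_zero) (z - Avec ρ t)).hasFDerivAt
    have h1 : HasDerivAt (fun τ => v z τ) (F (-(Avec' ρ t))) t := by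
      have hz : HasDerivAt (fun τ => z - Avec ρ τ) (-(Avec' ρ t)) t := by
        exact ((hasDerivAt_const t z).sub (hasDerivAt_Avec ρ t)).congr_deriv (zero_sub _)
      have h := hF.comp_hasDerivAt t hz
      simpa [hv, hαA, Function.comp_def] using h
    have hg : HasFDerivAt (fun y => v y t) F z := by
      have hid : HasFDerivAt (fun y : EuclideanSpace ℝ (Fin 2) => y - Avec ρ t)
          (ContinuousLinearMap.id ℝ (EuclideanSpace ℝ (Fin 2))) z :=
        (hasFDerivAt_id z).sub_const _
      have h := hF.comp z hid
      simpa [hv, hαA, Function.comp_def] using h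
    have hgrad : gradient (fun y => v y t) z
        = (InnerProductSpace.toDual ℝ (EuclideanSpace ℝ (Fin 2))).symm F := by
      rw [gradient, hg.fderiv]
    have hinner : (inner ℝ (deriv α t) (gradient (fun y => v y t) z) : ℝ) = F (Avec' ρ t) := by
      rw [hderivα, hgrad, real_inner_comm, InnerProductSpace.toDual_symm_apply]
    rw [h1.deriv, hinner, map_neg]
    ring
  · intro t
    rw [hderivα]
    exact norm_Avec' ρ hρ.le t
  · intro t _
    have hU : IsOpen {z : EuclideanSpace ℝ (Fin 2) | 3 * ρ / 2 < ‖z‖} :=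
      isOpen_lt continuous_const continuous_norm
    have hsub : Metric.sphere (0 : EuclideanSpace ℝ (Fin 2)) σ
        ⊆ {z | 3 * ρ / 2 < ‖z‖} := by
      intro z hz
      rw [Metric.mem_sphere, dist_zero_right] at hz
      simpa [hz] using hσ
    filter_upwards [hU.mem_nhdsSet.mpr hsub] with z hz
    rw [hv]
    apply image_eq_zero_of_notMem_tsupport
    intro hmem
    have hball := hsupp hmem
    rw [Metric.mem_ball, dist_zero_right] at hball
    have h1 : ‖z‖ - ‖α t‖ ≤ ‖z - α t‖ := norm_sub_norm_le _ _
    have h2 : ‖α t‖ = ρ := by rw [hαA]; exact norm_Avec ρ hρ.le t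
    have hz' : 3 * ρ / 2 < ‖z‖ := hz
    linarith
end
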